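/- Fix ε ∈ ℝ and define Ĥ₅(ε)(x, y) = (x² + y²)/(2(1 + ε²x²)) on ℝ². Then for all (x, y) ∈ ℝ²: y(1 + ε²x²)·∂Ĥ₅/∂x(x, y) − x(1 − ε²y²)·∂Ĥ₅/∂y(x, y) = 0, where ∂Ĥ₅/∂x(x, y) = x(1 − ε²y²)/(1 + ε²x²)² and ∂Ĥ₅/∂y(x, y) = y/(1 + ε²x²) are the partial derivatives of Ĥ₅. Since Ĥ₅ is independent of z, this means Ĥ₅(ε) is a Casimir function of the deformed Poisson structure P⁽⁵⁾(ε) on ℝ³ with brackets {x,y} = 0, {y,z} = x(1 − ε²y²), {z,x} = y(1 + ε²x²): all three components of P⁽⁵⁾(ε)·dĤ₅(ε) vanish identically. -/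

import Mathlib

/-- `Ĥ₅(ε)(x,y) = (x²+y²)/(2(1+ε²x²))` is a Casimir of the deformed Poisson
structure `P⁽⁵⁾(ε)` with `{x,y} = 0`, `{y,z} = x(1-ε²y²)`,
`{z,x} = y(1+ε²x²)`: its partial derivatives are
`∂Ĥ₅/∂x = x(1-ε²y²)/(1+ε²x²)²` and `∂Ĥ₅/∂y = y/(1+ε²x²)`, and
`y(1+ε²x²)·∂Ĥ₅/∂x - x(1-ε²y²)·∂Ĥ₅/∂y = 0`. -/
theorem H5_casimir_deformed_P5 (ε : ℝ) :
    ∀ x y : ℝ,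
      HasDerivAt (fun s : ℝ => (s^2 + y^2)/(2*(1 + ε^2*s^2)))
        (x*(1 - ε^2*y^2)/(1 + ε^2*x^2)^2) x ∧
      HasDerivAt (fun s : ℝ => (x^2 + s^2)/(2*(1 + ε^2*x^2)))
        (y/(1 + ε^2*x^2)) y ∧
      y*(1 + ε^2*x^2)*(x*(1 - ε^2*y^2)/(1 + ε^2*x^2)^2) -
        x*(1 - ε^2*y^2)*(y/(1 + ε^2*x^2)) = 0 := by
  intro x y
  have hpos : (0:ℝ) < 1 + ε^2*x^2 := by positivity
  have hne : (1 + ε^2*x^2) ≠ 0 := ne_of_gt hpos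
  have h2ne : (2*(1 + ε^2*x^2)) ≠ 0 := by positivity
  refine ⟨?_, ?_, ?_⟩
  · have hnum : HasDerivAt (fun s : ℝ => s^2 + y^2) (2*x) x := by
      simpa using ((hasDerivAt_pow 2 x).add_const (y^2))
    have hden : HasDerivAt (fun s : ℝ => 2*(1 + ε^2*s^2)) (2*(ε^2*(2*x))) x := by
      have : HasDerivAt (fun s : ℝ => 1 + ε^2*s^2) (ε^2*(2*x)) x := by
        simpa using (((hasDerivAt_pow 2 x).const_mul (ε^2)).const_add 1)
      simpa using this.const_mul 2
    have := hnum.div hden (by positivity)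
    refine this.congr_deriv ?_
    field_simp
    ring
  · have hnum : HasDerivAt (fun s : ℝ => x^2 + s^2) (2*y) y := by
      simpa using ((hasDerivAt_pow 2 y).const_add (x^2))
    have := hnum.div_const (2*(1 + ε^2*x^2))
    refine this.congr_deriv ?_
    field_simp
  · field_simp
    ring
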